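/- Let a, A : ℤ^m → ℤ be the (finitely supported) coefficient functions defined by ∏_{1≤i<j≤m}(1 − x_i/x_j) · ∏_{1≤r<s≤m}(1 − 1/(x_r x_s)) = Σ_{γ∈ℤ^m} a(γ) x^γ and ∏_{1≤i<j≤m}(1 − x_i/x_j) · ∏_{1≤r≤s≤m}(1 − 1/(x_r x_s)) = Σ_{γ∈ℤ^m} A(γ) x^γ. Then for every g ∈ {B_m, C_m, D_m} and every β ∈ ℤ^m: v_β^g = Σ_{γ∈ℤ^m} a(γ) e^g_{β+γ} and v_β^g = Σ_{γ∈ℤ^m} A(γ) E^g_{β+γ}. -/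

import Mathlib

open scoped BigOperators

noncomputable section

/-- Integral weights of rank `m`, identified with `ℤ^m`. -/
abbrev Wt (m : ℕ) := Fin m → ℤ

/-- Rational weights of rank `m` (needed for the half-integral `ρ` of type `B`). -/
abbrev QWt (m : ℕ) := Fin m → ℚ

/-- Coercion of an integral weight to a rational weight. -/
def castWt {m : ℕ} (β : Wt m) : QWt m := fun i => (β i : ℚ)

/-- The standard basis vector `ε_i` of `ℤ^m`. -/
def eps {m : ℕ} (i : Fin m) : Wt m := fun j => if j = i then 1 else 0

/-- `ρ_m = (m, m-1, ..., 1)`. -/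
def rhoZ (m : ℕ) : Wt m := fun i => (m : ℤ) - (i : ℕ)

/-- `κ_m = (1, ..., 1)`. -/
def kappa (m : ℕ) : Wt m := fun _ => 1

/-- A partition of length `m`: a weakly decreasing element of `ℕ^m` (written in `ℤ^m`). -/
def IsPart {m : ℕ} (lam : Wt m) : Prop := Antitone lam ∧ ∀ i, 0 ≤ lam i

/-- `|λ| = λ_1 + ⋯ + λ_m`. -/
def wtSum {m : ℕ} (lam : Wt m) : ℤ := ∑ i, lam i

/-- The conjugate partition, regarded as a partition of length `n`:
`λ'_j = #{i : λ_i ≥ j}` (with `j` one-based). -/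
def conj {m : ℕ} (n : ℕ) (lam : Wt m) : Wt n :=
  fun j => ((Finset.univ.filter (fun i : Fin m => ((j : ℕ) : ℤ) < lam i)).card : ℤ)

/-- The permutation action of `S_m` on `ℤ^m`. -/
def pact {m : ℕ} (σ : Equiv.Perm (Fin m)) (β : Wt m) : Wt m := β ∘ σ.symm

/-- The permutation action of `S_m` on `ℚ^m`. -/
def qpact {m : ℕ} (σ : Equiv.Perm (Fin m)) (β : QWt m) : QWt m := β ∘ σ.symm

/-- The dot action `σ ∘ α = σ(α + ρ_m) - ρ_m`. -/
def dotAct {m : ℕ} (σ : Equiv.Perm (Fin m)) (α : Wt m) : Wt m :=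
  pact σ (α + rhoZ m) - rhoZ m

/-- The three root-system types considered in the paper. -/
inductive RT | B | C | D
deriving DecidableEq

/-- The action of a signed permutation `(σ, ε)` on `ℚ^m`: the hyperoctahedral group
`W_{B_m} = W_{C_m}` consists of all such pairs. -/
def sact {m : ℕ} (σ : Equiv.Perm (Fin m)) (ε : Fin m → Bool) (β : QWt m) : QWt m :=
  fun i => (if ε i then -1 else 1) * β (σ.symm i)

/-- `(-1)^{l(w)}` for a signed permutation `w = (σ, ε)`: the sign character of the
hyperoctahedral group, which takes value `-1` on each Coxeter generator. -/
def ssign {m : ℕ} (σ : Equiv.Perm (Fin m)) (ε : Fin m → Bool) : ℤ :=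
  (Equiv.Perm.sign σ : ℤ) * ∏ i, (if ε i then -1 else 1)

/-- Which signed permutations belong to the Weyl group of type `g`: for `B` and `C` all of
them, for `D` only those changing an even number of signs. -/
def allowed (g : RT) {m : ℕ} (ε : Fin m → Bool) : Prop :=
  g = RT.D → (∏ i, (if ε i then (-1 : ℤ) else 1)) = 1

instance (g : RT) {m : ℕ} : DecidablePred (allowed g (m := m)) := by
  unfold allowed; infer_instance

/-- The Laurent polynomial ring `ℤ[x_1^{±1/2}, ..., x_m^{±1/2}]` (allowing all rational
exponents), realized as the group algebra of `ℚ^m`. -/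
abbrev LQ (m : ℕ) := AddMonoidAlgebra ℤ (QWt m)

/-- The monomial `x^β`. -/
def XQ {m : ℕ} (β : QWt m) : LQ m := AddMonoidAlgebra.single β 1

instance {m : ℕ} : IsDomain (LQ m) := NoZeroDivisors.to_isDomain _

/-- The fraction field of the Laurent polynomial ring, in which Schur functions live. -/
abbrev KK (m : ℕ) := FractionRing (LQ m)

def toK {m : ℕ} (p : LQ m) : KK m := algebraMap (LQ m) (KK m) p

/-- The half-sum of positive roots: `ρ_B = ρ_m - (1/2,…,1/2)`, `ρ_C = ρ_m`,
`ρ_D = ρ_m - (1,…,1)`. -/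
def rhoG (g : RT) (m : ℕ) : QWt m :=
  match g with
  | RT.B => fun i => ((m : ℚ) - (i : ℕ)) - 1/2
  | RT.C => fun i => (m : ℚ) - (i : ℕ)
  | RT.D => fun i => ((m : ℚ) - (i : ℕ)) - 1

/-- `a_β = Σ_{w ∈ W_g} (-1)^{l(w)} x^{w(β)}`. -/
def aalt (g : RT) {m : ℕ} (β : QWt m) : LQ m :=
  ∑ σ : Equiv.Perm (Fin m), ∑ ε ∈ Finset.univ.filter (allowed g),
    ssign σ ε • XQ (sact σ ε β)

/-- The Schur function `s_ν^g = a_{ν+ρ_g} / a_{ρ_g}`. -/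
def SchurF (g : RT) {m : ℕ} (ν : QWt m) : KK m :=
  toK (aalt g (ν + rhoG g m)) / toK (aalt g (rhoG g m))

/-- The one-row weight `(k, 0, …, 0)`. -/
def rowWt (m : ℕ) (k : ℤ) : QWt m := fun i => if (i : ℕ) = 0 then (k : ℚ) else 0

/-- The one-column weight `(1^p, 0^{m-p})`. -/
def colWt (m : ℕ) (p : ℤ) : QWt m := fun i => if ((i : ℕ) : ℤ) < p then 1 else 0

/-- `h_k^g = s_{(k,0,…,0)}^g` for `k ≥ 0`, and `0` for `k < 0`. -/
def hF (g : RT) (m : ℕ) (k : ℤ) : KK m := if 0 ≤ k then SchurF g (rowWt m k) else 0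

/-- `H_k^g = h_k^g + h_{k-2}^g + ⋯ + h_{k mod 2}^g` for `k ≥ 0`, and `0` for `k < 0`. -/
def HF (g : RT) (m : ℕ) (k : ℤ) : KK m :=
  if 0 ≤ k then ∑ j ∈ Finset.range (k.toNat / 2 + 1), hF g m (k - 2 * j) else 0

/-- `e_p^g = s^g_{(1^p,0^{m-p})}` for `0 ≤ p ≤ m`, `e_p^g = e^g_{2m-p}` for `m < p ≤ 2m`,
and `0` otherwise. -/
def eF (g : RT) (m : ℕ) (p : ℤ) : KK m :=
  if 0 ≤ p ∧ p ≤ (m : ℤ) then SchurF g (colWt m p)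
  else if (m : ℤ) < p ∧ p ≤ 2 * m then SchurF g (colWt m (2 * m - p))
  else 0

/-- `E_k^g = e_k^g + e_{k-2}^g + ⋯ + e_{k mod 2}^g` for `k ≥ 0`, and `0` for `k < 0`. -/
def EF (g : RT) (m : ℕ) (k : ℤ) : KK m :=
  if 0 ≤ k then ∑ j ∈ Finset.range (k.toNat / 2 + 1), eF g m (k - 2 * j) else 0

/-- The `m × m` determinant `u_α^g` (in the one-row characters `h^g`). -/
def uDet (g : RT) {m : ℕ} (α : Wt m) : KK m :=
  Matrix.det (Matrix.of fun i j : Fin m =>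
    if (j : ℕ) = 0 then hF g m (α i - (i : ℕ))
    else hF g m (α i - (i : ℕ) + (j : ℕ)) + hF g m (α i - (i : ℕ) - (j : ℕ)))

/-- The `n × n` determinant `v_β^g` (in the one-column characters `e^g` of rank `m`). -/
def vDet (g : RT) (m : ℕ) {n : ℕ} (β : Wt n) : KK m :=
  Matrix.det (Matrix.of fun i j : Fin n =>
    if (j : ℕ) = 0 then eF g m (β i - (i : ℕ))
    else eF g m (β i - (i : ℕ) + (j : ℕ)) + eF g m (β i - (i : ℕ) - (j : ℕ)))

/-- `h_α^g = h^g_{α_1} ⋯ h^g_{α_m}` (and similarly for arbitrary index length). -/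
def hProd (g : RT) (m : ℕ) {n : ℕ} (α : Wt n) : KK m := ∏ i, hF g m (α i)

def HProd (g : RT) (m : ℕ) {n : ℕ} (α : Wt n) : KK m := ∏ i, HF g m (α i)

def eProd (g : RT) (m : ℕ) {n : ℕ} (α : Wt n) : KK m := ∏ i, eF g m (α i)

def EProd (g : RT) (m : ℕ) {n : ℕ} (α : Wt n) : KK m := ∏ i, EF g m (α i)

/-- The Laurent polynomial ring `ℤ[x_1^{±1}, ..., x_m^{±1}]`, realized as the group
algebra of `ℤ^m`. -/
abbrev LZ (m : ℕ) := AddMonoidAlgebra ℤ (Wt m)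

/-- The monomial `x^β`. -/
def XZ {m : ℕ} (β : Wt m) : LZ m := AddMonoidAlgebra.single β 1

/-- `φ_m = ∏_{1≤i<j≤m} (1 - x_i/x_j) · ∏_{1≤r<s≤m} (1 - 1/(x_r x_s))`; its coefficients
are the function `a` (resp. `f_{q=1}` up to expansion conventions). -/
def phiSmall (m : ℕ) : LZ m :=
  (∏ p ∈ Finset.univ.filter (fun p : Fin m × Fin m => p.1 < p.2),
      (1 - XZ (eps p.1 - eps p.2))) *
  (∏ p ∈ Finset.univ.filter (fun p : Fin m × Fin m => p.1 < p.2),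
      (1 - XZ (-(eps p.1 + eps p.2))))

/-- `Φ_m = ∏_{1≤i<j≤m} (1 - x_i/x_j) · ∏_{1≤r≤s≤m} (1 - 1/(x_r x_s))`. -/
def phiBig (m : ℕ) : LZ m :=
  (∏ p ∈ Finset.univ.filter (fun p : Fin m × Fin m => p.1 < p.2),
      (1 - XZ (eps p.1 - eps p.2))) *
  (∏ p ∈ Finset.univ.filter (fun p : Fin m × Fin m => p.1 ≤ p.2),
      (1 - XZ (-(eps p.1 + eps p.2))))

/-- The coefficient `a(γ)` of `x^γ` in `φ_m`. -/
def coeffSmall (m : ℕ) (γ : Wt m) : ℤ := (phiSmall m).coeff γ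

/-- The coefficient `A(γ)` of `x^γ` in `Φ_m`. -/
def coeffBig (m : ℕ) (γ : Wt m) : ℤ := (phiBig m).coeff γ

/-- The generic `q`-partition function attached to a finite family `v` of vectors:
the coefficient of `q^d` counts the families `(n_i)` of nonnegative integers with
`Σ n_i = d` and `Σ n_i v_i = β`.  This encodes the coefficient of `x^β` in the formal
series expansion of `∏_i (1 - q x^{v_i})^{-1}` as a power series in `q`. -/
def PqPS {m : ℕ} {ι : Type} [Fintype ι] (v : ι → Wt m) (β : QWt m) : PowerSeries ℤ :=
  PowerSeries.mk fun d =>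
    (Nat.card {n : ι → ℕ // (∑ i, n i) = d ∧ castWt (∑ i, (n i : ℤ) • v i) = β} : ℤ)

/-- The specialization at `q = 1` of `PqPS`: the number of ways to write `β` as a
nonnegative integral combination of the vectors `v_i`. -/
def POne {m : ℕ} {ι : Type} [Fintype ι] (v : ι → Wt m) (β : Wt m) : ℤ :=
  (Nat.card {n : ι → ℕ // (∑ i, (n i : ℤ) • v i) = β} : ℤ)

/-- Index type for the pairs `1 ≤ i < j ≤ m`. -/
abbrev IdxLT (m : ℕ) := {p : Fin m × Fin m // p.1 < p.2}

/-- Index type for the pairs `1 ≤ i ≤ j ≤ m`. -/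
abbrev IdxLE (m : ℕ) := {p : Fin m × Fin m // p.1 ≤ p.2}

/-- The positive roots `ε_i - ε_j` (`i < j`) of type `A_m`. -/
def rootsA (m : ℕ) : IdxLT m → Wt m := fun p => eps p.1.1 - eps p.1.2

/-- The positive roots of type `B_m`. -/
def rootsB (m : ℕ) : IdxLT m ⊕ IdxLT m ⊕ Fin m → Wt m
  | .inl p => eps p.1.1 - eps p.1.2
  | .inr (.inl p) => eps p.1.1 + eps p.1.2
  | .inr (.inr i) => eps i

/-- The positive roots of type `C_m` (note `2ε_i = ε_i + ε_i`). -/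
def rootsC (m : ℕ) : IdxLT m ⊕ IdxLE m → Wt m
  | .inl p => eps p.1.1 - eps p.1.2
  | .inr p => eps p.1.1 + eps p.1.2

/-- The positive roots of type `D_m`. -/
def rootsD (m : ℕ) : IdxLT m ⊕ IdxLT m → Wt m
  | .inl p => eps p.1.1 - eps p.1.2
  | .inr p => eps p.1.1 + eps p.1.2

/-- The vectors `ε_i - ε_j` (`i < j`) and `-(ε_r + ε_s)` (`r < s`), whose `q`-partition
function is `f_q`. -/
def vfSmall (m : ℕ) : IdxLT m ⊕ IdxLT m → Wt m
  | .inl p => eps p.1.1 - eps p.1.2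
  | .inr p => -(eps p.1.1 + eps p.1.2)

/-- The vectors `ε_i - ε_j` (`i < j`) and `-(ε_r + ε_s)` (`r ≤ s`), whose `q`-partition
function is `F_q`. -/
def vfBig (m : ℕ) : IdxLT m ⊕ IdxLE m → Wt m
  | .inl p => eps p.1.1 - eps p.1.2
  | .inr p => -(eps p.1.1 + eps p.1.2)

/-- `f_q`. -/
def fq {m : ℕ} (β : Wt m) : PowerSeries ℤ := PqPS (vfSmall m) (castWt β)

/-- `F_q`. -/
def Fq {m : ℕ} (β : Wt m) : PowerSeries ℤ := PqPS (vfBig m) (castWt β)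

/-- The `q`-analogue of Kostant's partition function, type `A_m`. -/
def PqA {m : ℕ} (β : QWt m) : PowerSeries ℤ := PqPS (rootsA m) β

/-- The `q`-analogue of Kostant's partition function, types `B_m`, `C_m`, `D_m`. -/
def PqG (g : RT) {m : ℕ} (β : QWt m) : PowerSeries ℤ :=
  match g with
  | RT.B => PqPS (rootsB m) β
  | RT.C => PqPS (rootsC m) β
  | RT.D => PqPS (rootsD m) β

/-- The Kostka–Foulkes polynomial
`K^g_{λ,μ}(q) = Σ_{w ∈ W_g} (-1)^{l(w)} P_q^g(w(λ+ρ_g) - (μ+ρ_g))`. -/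
def KF (g : RT) {m : ℕ} (lam mu : QWt m) : PowerSeries ℤ :=
  ∑ σ : Equiv.Perm (Fin m), ∑ ε ∈ Finset.univ.filter (allowed g),
    ssign σ ε • PqG g (sact σ ε (lam + rhoG g m) - (mu + rhoG g m))

/-- The Kostka–Foulkes polynomial of type `A_m`,
`K^{A_m}_{λ,γ}(q) = Σ_{σ ∈ S_m} (-1)^{l(σ)} P_q^{A_m}(σ(λ+ρ_m) - (γ+ρ_m))`,
defined for arbitrary `γ ∈ ℤ^m`. -/
def KFA {m : ℕ} (lam gamma : Wt m) : PowerSeries ℤ :=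
  ∑ σ : Equiv.Perm (Fin m),
    (Equiv.Perm.sign σ : ℤ) • PqA (castWt (pact σ (lam + rhoZ m) - (gamma + rhoZ m)))

/-- `u_{λ,μ}(q) = Σ_{σ ∈ S_m} (-1)^{l(σ)} f_q(σ(λ+ρ_m) - μ - ρ_m)`. -/
def uP {m : ℕ} (lam mu : Wt m) : PowerSeries ℤ :=
  ∑ σ : Equiv.Perm (Fin m),
    (Equiv.Perm.sign σ : ℤ) • fq (pact σ (lam + rhoZ m) - mu - rhoZ m)

/-- `U_{λ,μ}(q) = Σ_{σ ∈ S_m} (-1)^{l(σ)} F_q(σ(λ+ρ_m) - μ - ρ_m)`. -/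
def UP {m : ℕ} (lam mu : Wt m) : PowerSeries ℤ :=
  ∑ σ : Equiv.Perm (Fin m),
    (Equiv.Perm.sign σ : ℤ) • Fq (pact σ (lam + rhoZ m) - mu - rhoZ m)

/-- `f_q` specialized at `q = 1`. -/
def fOne {m : ℕ} (β : Wt m) : ℤ := POne (vfSmall m) β

/-- `F_q` specialized at `q = 1`. -/
def FOne {m : ℕ} (β : Wt m) : ℤ := POne (vfBig m) β

/-- `u_{λ,μ}(1)`. -/
def uP1 {m : ℕ} (lam mu : Wt m) : ℤ :=
  ∑ σ : Equiv.Perm (Fin m),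
    (Equiv.Perm.sign σ : ℤ) * fOne (pact σ (lam + rhoZ m) - mu - rhoZ m)

/-- `U_{λ,μ}(1)`. -/
def UP1 {m : ℕ} (lam mu : Wt m) : ℤ :=
  ∑ σ : Equiv.Perm (Fin m),
    (Equiv.Perm.sign σ : ℤ) * FOne (pact σ (lam + rhoZ m) - mu - rhoZ m)

/-- `λ̂ = (n - λ_m, …, n - λ_1)`. -/
def hatP {m : ℕ} (n : ℤ) (lam : Wt m) : Wt m := fun i => n - lam i.rev

/-- The involution `I(α_1, …, α_m) = (-α_m, …, -α_1)`. -/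
def invI {m : ℕ} (α : Wt m) : Wt m := fun i => -α i.rev

/-- `σ*`, defined by `σ*(k) = σ(m - k + 1)`. -/
def starPerm {m : ℕ} (σ : Equiv.Perm (Fin m)) : Equiv.Perm (Fin m) :=
  (Fin.revPerm).trans σ

/-- The number of ways to write `β = Σ_{1≤r≤s≤m} e_{r,s} (ε_r + ε_s)`, `e_{r,s} ∈ ℕ`. -/
def cC (m : ℕ) (β : Wt m) : ℕ :=
  Nat.card {e : IdxLE m → ℕ // (∑ p, (e p : ℤ) • (eps p.1.1 + eps p.1.2)) = β}

/-- The number of ways to write `β = Σ_{1≤r<s≤m} e_{r,s} (ε_r + ε_s)`, `e_{r,s} ∈ ℕ`. -/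
def cD (m : ℕ) (β : Wt m) : ℕ :=
  Nat.card {e : IdxLT m → ℕ // (∑ p, (e p : ℤ) • (eps p.1.1 + eps p.1.2)) = β}

/-- The set `C_k^m`. -/
def setC (m k : ℕ) : Set (Wt m) :=
  {β | (∃ e : IdxLE m → ℕ, (∑ p, (e p : ℤ) • (eps p.1.1 + eps p.1.2)) = β) ∧
       wtSum β = 2 * k}

/-- The set `D_k^m`. -/
def setD (m k : ℕ) : Set (Wt m) :=
  {β | (∃ e : IdxLT m → ℕ, (∑ p, (e p : ℤ) • (eps p.1.1 + eps p.1.2)) = β) ∧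
       wtSum β = 2 * k}


/-! ### Auxiliary development for Statement 5 -/

namespace Stmt5Aux

open Finset AddMonoidAlgebra Polynomial

variable {m : ℕ}

/-! #### Basic monomial lemmas -/

lemma XZ_mul (a b : Wt m) : XZ a * XZ b = XZ (a + b) := by
  simp [XZ, AddMonoidAlgebra.single_mul_single]

lemma XZ_zero : XZ (0 : Wt m) = 1 := rfl

lemma XZ_pow (a : Wt m) (n : ℕ) : XZ a ^ n = XZ (n • a) := by
  simp [XZ, AddMonoidAlgebra.single_pow]

/-- `Y_i = x_i + x_i^{-1}`. -/
def Yv (i : Fin m) : LZ m := XZ (eps i) + XZ (-eps i)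

lemma pair_id (i j : Fin m) :
    (1 - XZ (eps i - eps j)) * (1 - XZ (-(eps i + eps j)))
      = XZ (-eps j) * (Yv j - Yv i) := by
  have h1 : XZ (eps i - eps j) * XZ (-(eps i + eps j)) = XZ (-eps j) * XZ (-eps j) := by
    rw [XZ_mul, XZ_mul]; congr 1; abel
  have h2 : XZ (-eps j) * XZ (eps j) = 1 := by
    rw [XZ_mul, neg_add_cancel, XZ_zero]
  have h3 : XZ (-eps j) * XZ (eps i) = XZ (eps i - eps j) := by
    rw [XZ_mul]; congr 1; abel
  have h4 : XZ (-eps j) * XZ (-eps i) = XZ (-(eps i + eps j)) := by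
    rw [XZ_mul]; congr 1; abel
  have expand : (1 - XZ (eps i - eps j)) * (1 - XZ (-(eps i + eps j)))
      = 1 - XZ (-(eps i + eps j)) - XZ (eps i - eps j)
        + XZ (eps i - eps j) * XZ (-(eps i + eps j)) := by ring
  rw [expand, h1]
  rw [Yv, Yv, mul_sub, mul_add, mul_add, h2, h3, h4]
  ring

/-! #### The coefficient-extraction additive map `psi` -/

/-- `psi G p = ∑ᶠ γ, p γ • G γ`. -/
def psiFun (G : Wt m → KK m) (p : LZ m) : KK m := ∑ᶠ γ, p.coeff γ • G γ

lemma psi_support (G : Wt m → KK m) (p : LZ m) :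
    Function.support (fun γ => p.coeff γ • G γ) ⊆ ↑p.coeff.support := by
  intro γ h
  simp only [Function.mem_support] at h
  simp only [Finset.mem_coe, Finsupp.mem_support_iff]
  intro h0
  rw [h0, zero_smul] at h
  exact h rfl

/-- `psi` as an additive monoid hom. -/
def psiHom (G : Wt m → KK m) : LZ m →+ KK m where
  toFun := psiFun G
  map_zero' := by
    simp only [psiFun]
    have : ∀ γ : Wt m, (0 : LZ m).coeff γ • G γ = 0 := by
      intro γ; rw [show (0 : LZ m).coeff γ = 0 from rfl, zero_smul]
    rw [finsum_congr this, finsum_zero]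
  map_add' p q := by
    simp only [psiFun]
    have hp : (Function.support fun γ => p.coeff γ • G γ).Finite :=
      (p.coeff.support.finite_toSet).subset (psi_support G p)
    have hq : (Function.support fun γ => q.coeff γ • G γ).Finite :=
      (q.coeff.support.finite_toSet).subset (psi_support G q)
    rw [← finsum_add_distrib hp hq]
    apply finsum_congr
    intro γ
    rw [AddMonoidAlgebra.coeff_add, Finsupp.add_apply, add_smul]

lemma psiHom_single (G : Wt m → KK m) (γ : Wt m) (c : ℤ) :
    psiHom G (AddMonoidAlgebra.single γ c) = c • G γ := by
  have h : ∀ δ : Wt m, δ ≠ γ → (AddMonoidAlgebra.single γ c : LZ m).coeff δ • G δ = 0 := by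
    intro δ hδ
    rw [AddMonoidAlgebra.coeff_single, Finsupp.single_apply, if_neg (fun h => hδ h.symm), zero_smul]
  show psiFun G _ = _
  rw [psiFun, finsum_eq_single _ γ h, AddMonoidAlgebra.coeff_single, Finsupp.single_apply, if_pos rfl]

/-! #### Evaluation of finitely supported exponent data -/

/-- Polynomial-side evaluation. -/
def evP (r : Fin m) (L : ℤ →₀ ℤ) : LZ m :=
  L.sum fun z c => AddMonoidAlgebra.single (z • eps r) c

/-- Value-side evaluation. -/
def ev {α : Type*} [AddCommGroup α] (h : ℤ → α) (L : ℤ →₀ ℤ) : α :=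
  L.sum fun z c => c • h z

lemma evP_single (r : Fin m) (z c) :
    evP r (Finsupp.single z c) = AddMonoidAlgebra.single (z • eps r) c :=
  Finsupp.sum_single_index (AddMonoidAlgebra.single_zero _)

lemma evP_sub (r : Fin m) (L L' : ℤ →₀ ℤ) :
    evP r (L - L') = evP r L - evP r L' :=
  Finsupp.sum_sub_index fun z b₁ b₂ => by
    rw [sub_eq_add_neg, AddMonoidAlgebra.single_add, AddMonoidAlgebra.single_neg, ← sub_eq_add_neg]

lemma ev_single {α : Type*} [AddCommGroup α] (h : ℤ → α) (z c) :
    ev h (Finsupp.single z c) = c • h z :=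
  Finsupp.sum_single_index (zero_zsmul _)

lemma ev_add {α : Type*} [AddCommGroup α] (h : ℤ → α) (L L' : ℤ →₀ ℤ) :
    ev h (L + L') = ev h L + ev h L' :=
  Finsupp.sum_add_index' (fun z => zero_zsmul _) (fun z b₁ b₂ => add_zsmul _ _ _)

lemma ev_sub {α : Type*} [AddCommGroup α] (h : ℤ → α) (L L' : ℤ →₀ ℤ) :
    ev h (L - L') = ev h L - ev h L' :=
  Finsupp.sum_sub_index fun z b₁ b₂ => sub_smul b₁ b₂ (h z)

/-! #### The master expansion lemma -/

lemma coord (σ : Equiv.Perm (Fin m)) (t : Fin m → ℤ) (k : Fin m) :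
    (∑ i, t i • eps (σ i)) k = t (σ.symm k) := by
  rw [Finset.sum_apply]
  have h : ∀ i : Fin m, (t i • eps (σ i)) k = if i = σ.symm k then t i else 0 := by
    intro i
    rw [Pi.smul_apply, eps]
    rcases eq_or_ne i (σ.symm k) with h | h
    · subst h
      rw [if_pos (σ.apply_symm_apply k).symm, if_pos rfl, smul_eq_mul, mul_one]
    · rw [if_neg, if_neg h, smul_zero]
      intro hk
      exact h (by rw [hk, Equiv.symm_apply_apply])
  rw [Finset.sum_congr rfl (fun i _ => h i), Finset.sum_ite_eq' Finset.univ (σ.symm k) t,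
    if_pos (Finset.mem_univ _)]

lemma prod_zsmul (c : Fin m → ℤ) (u : Fin m → KK m) :
    (∏ i, c i) • (∏ i, u i) = ∏ i, c i • u i := by
  simp only [zsmul_eq_mul]
  push_cast
  rw [Finset.prod_mul_distrib]

lemma master (G : Fin m → ℤ → KK m) (σ : Equiv.Perm (Fin m)) (L : Fin m → ℤ →₀ ℤ) :
    psiHom (fun γ => ∏ k, G k (γ k)) (∏ i, evP (σ i) (L i))
      = ∏ i, ev (fun z => G (σ i) z) (L i) := by
  have hprod : (∏ i, evP (σ i) (L i)) =
      ∑ t ∈ Fintype.piFinset (fun i => (L i).support),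
        AddMonoidAlgebra.single (∑ i, t i • eps (σ i)) (∏ i, L i (t i)) := by
    calc ∏ i, evP (σ i) (L i)
        = ∏ i, ∑ z ∈ (L i).support, AddMonoidAlgebra.single (z • eps (σ i)) (L i z) := rfl
      _ = ∑ t ∈ Fintype.piFinset (fun i => (L i).support),
            ∏ i, AddMonoidAlgebra.single (t i • eps (σ i)) (L i (t i)) :=
          Finset.prod_univ_sum _ _
      _ = _ := by
          refine Finset.sum_congr rfl fun t _ => ?_
          rw [AddMonoidAlgebra.prod_single]
  rw [hprod, map_sum]
  have hterm : ∀ t : Fin m → ℤ,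
      psiHom (fun γ => ∏ k, G k (γ k))
        (AddMonoidAlgebra.single (∑ i, t i • eps (σ i)) (∏ i, L i (t i)))
      = ∏ i, (L i (t i)) • G (σ i) (t i) := by
    intro t
    rw [psiHom_single]
    have h1 : (fun k => G k ((∑ i, t i • eps (σ i)) k)) = fun k => G k (t (σ.symm k)) := by
      funext k; rw [coord]
    calc (∏ i, L i (t i)) • ∏ k, G k ((∑ i, t i • eps (σ i)) k)
        = (∏ i, L i (t i)) • ∏ k, G k (t (σ.symm k)) := by rw [h1]
      _ = (∏ i, L i (t i)) • ∏ i, G (σ i) (t i) := by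
          rw [← Equiv.prod_comp σ (fun k => G k (t (σ.symm k)))]
          simp only [Equiv.symm_apply_apply]
      _ = ∏ i, (L i (t i)) • G (σ i) (t i) := prod_zsmul _ _
  have hback : (∏ i, ev (fun z => G (σ i) z) (L i))
      = ∑ t ∈ Fintype.piFinset (fun i => (L i).support),
          ∏ i, (L i (t i)) • G (σ i) (t i) := by
    calc ∏ i, ev (fun z => G (σ i) z) (L i)
        = ∏ i, ∑ z ∈ (L i).support, (L i z) • G (σ i) z := rfl
      _ = _ := Finset.prod_univ_sum _ _
  rw [Finset.sum_congr rfl (fun t _ => hterm t), hback]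

end Stmt5Aux

namespace Stmt5Aux

open Finset AddMonoidAlgebra Polynomial

variable {m : ℕ}

/-! #### Products over pairs -/

lemma prod_pairs₁ {M : Type*} [CommMonoid M] (f : Fin m × Fin m → M) :
    ∏ p ∈ Finset.univ.filter (fun p : Fin m × Fin m => p.1 < p.2), f p
      = ∏ i, ∏ j ∈ Finset.Ioi i, f (i, j) := by
  rw [Finset.prod_sigma' Finset.univ (fun i => Finset.Ioi i) (fun i j => f (i, j))]
  refine (Finset.prod_nbij' (fun p : Fin m × Fin m => (⟨p.1, p.2⟩ : Σ _ : Fin m, Fin m))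
    (fun x => (x.1, x.2)) ?_ ?_ ?_ ?_ ?_).symm.symm
  · intro p hp
    simp only [Finset.mem_filter, Finset.mem_univ, true_and] at hp
    simp [Finset.mem_sigma, Finset.mem_Ioi, hp]
  · intro x hx
    simp only [Finset.mem_sigma, Finset.mem_univ, Finset.mem_Ioi, true_and] at hx
    simp [hx]
  · intro p _; rfl
  · intro x _; rfl
  · intro p _; rfl

lemma prod_pairs₂ {M : Type*} [CommMonoid M] (f : Fin m × Fin m → M) :
    ∏ p ∈ Finset.univ.filter (fun p : Fin m × Fin m => p.1 < p.2), f p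
      = ∏ j, ∏ i ∈ Finset.Iio j, f (i, j) := by
  rw [Finset.prod_sigma' Finset.univ (fun j => Finset.Iio j) (fun j i => f (i, j))]
  refine (Finset.prod_nbij' (fun p : Fin m × Fin m => (⟨p.2, p.1⟩ : Σ _ : Fin m, Fin m))
    (fun x => (x.2, x.1)) ?_ ?_ ?_ ?_ ?_).symm.symm
  · intro p hp
    simp only [Finset.mem_filter, Finset.mem_univ, true_and] at hp
    simp [Finset.mem_sigma, Finset.mem_Iio, hp]
  · intro x hx
    simp only [Finset.mem_sigma, Finset.mem_univ, Finset.mem_Iio, true_and] at hx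
    simp [hx]
  · intro p _; rfl
  · intro x _; rfl
  · intro p _; rfl

/-! #### Dickson polynomials: degree, monicity, evaluation at `x + x⁻¹` -/

lemma dickson_natDegree_le {R : Type*} [CommRing R] [Nontrivial R] :
    ∀ n : ℕ, (Polynomial.dickson 1 (1 : R) n).natDegree ≤ n
  | 0 => by
    rw [Polynomial.dickson_zero]
    refine le_trans (Polynomial.natDegree_sub_le _ _) ?_
    simp [Polynomial.natDegree_ofNat, Polynomial.natDegree_natCast]
  | 1 => by rw [Polynomial.dickson_one]; exact Polynomial.natDegree_X_le
  | n + 2 => by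
    rw [Polynomial.dickson_add_two]
    refine le_trans (Polynomial.natDegree_sub_le _ _) ?_
    have h1 : (Polynomial.X * Polynomial.dickson 1 (1 : R) (n + 1)).natDegree ≤ n + 2 := by
      have hd := dickson_natDegree_le (R := R) (n + 1)
      have hmul : (Polynomial.X * Polynomial.dickson 1 (1 : R) (n + 1)).natDegree
          ≤ (Polynomial.X : R[X]).natDegree + (Polynomial.dickson 1 (1 : R) (n + 1)).natDegree :=
        Polynomial.natDegree_mul_le
      rw [Polynomial.natDegree_X] at hmul
      omega
    have h2 : (Polynomial.C (1 : R) * Polynomial.dickson 1 (1 : R) n).natDegree ≤ n + 2 := by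
      rw [Polynomial.C_1, one_mul]
      exact le_trans (dickson_natDegree_le n) (by omega)
    omega

lemma dickson_monic_deg {R : Type*} [CommRing R] [Nontrivial R] :
    ∀ n : ℕ, (Polynomial.dickson 1 (1 : R) (n + 1)).Monic ∧
      (Polynomial.dickson 1 (1 : R) (n + 1)).natDegree = n + 1
  | 0 => ⟨Polynomial.monic_X, Polynomial.natDegree_X⟩
  | n + 1 => by
    obtain ⟨ihm, ihd⟩ := dickson_monic_deg (R := R) n
    have hXm : (Polynomial.X * Polynomial.dickson 1 (1 : R) (n + 1)).Monic :=
      Polynomial.monic_X.mul ihm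
    have hXdeg : (Polynomial.X * Polynomial.dickson 1 (1 : R) (n + 1)).natDegree = n + 2 := by
      rw [Polynomial.monic_X.natDegree_mul ihm, Polynomial.natDegree_X, ihd]
      omega
    have hlt : (Polynomial.C (1 : R) * Polynomial.dickson 1 (1 : R) n).degree
        < (Polynomial.X * Polynomial.dickson 1 (1 : R) (n + 1)).degree := by
      rw [Polynomial.C_1, one_mul, Polynomial.degree_eq_natDegree hXm.ne_zero, hXdeg]
      refine lt_of_le_of_lt (Polynomial.degree_le_natDegree) ?_
      exact_mod_cast lt_of_le_of_lt (dickson_natDegree_le (R := R) n) (show n < n + 2 by omega)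
    constructor
    · rw [Polynomial.dickson_add_two]
      exact hXm.sub_of_left hlt
    · rw [Polynomial.dickson_add_two,
        Polynomial.natDegree_sub_eq_left_of_natDegree_lt, hXdeg]
      rw [hXdeg, Polynomial.C_1, one_mul]
      exact lt_of_le_of_lt (dickson_natDegree_le n) (by omega)

end Stmt5Aux

namespace Stmt5Aux

open Finset AddMonoidAlgebra Polynomial

variable {m : ℕ}

/-! #### The Chebyshev-like monomials and the Vandermonde step -/

/-- `P_j(x_i) = x_i^j + x_i^{-j}` (with `P_0 = 1`). -/
def Pc (i : Fin m) (j : ℕ) : LZ m :=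
  if j = 0 then 1 else XZ (j • eps i) + XZ (-(j • eps i))

/-- The polynomial family realizing the `P_j` as polynomials in `Y_i`. -/
def dq (j : Fin m) : Polynomial (LZ m) :=
  if (j : ℕ) = 0 then 1 else Polynomial.dickson 1 1 (j : ℕ)

lemma dq_natDegree (j : Fin m) : (dq j).natDegree = (j : ℕ) := by
  unfold dq
  split_ifs with h
  · rw [Polynomial.natDegree_one, h]
  · obtain ⟨k, hk⟩ := Nat.exists_eq_succ_of_ne_zero h
    rw [hk]
    exact (dickson_monic_deg k).2

lemma dq_monic (j : Fin m) : (dq j).Monic := by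
  unfold dq
  split_ifs with h
  · exact Polynomial.monic_one
  · obtain ⟨k, hk⟩ := Nat.exists_eq_succ_of_ne_zero h
    rw [hk]
    exact (dickson_monic_deg k).1

lemma dq_eval (i j : Fin m) : (dq j).eval (Yv i) = Pc i (j : ℕ) := by
  unfold dq Pc
  split_ifs with h
  · exact Polynomial.eval_one
  · have hxy : XZ (eps i) * XZ (-eps i) = 1 := by
      rw [XZ_mul, add_neg_cancel, XZ_zero]
    have hev := Polynomial.dickson_one_one_eval_add_inv (XZ (eps i)) (XZ (-eps i)) hxy (j : ℕ)
    rw [Yv, hev, XZ_pow, XZ_pow]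
    congr 1
    congr 1
    rw [smul_neg]

lemma vdm : (∏ p ∈ Finset.univ.filter (fun p : Fin m × Fin m => p.1 < p.2), (Yv p.2 - Yv p.1))
    = (Matrix.of fun i j : Fin m => Pc i (j : ℕ)).det := by
  rw [prod_pairs₁, ← Matrix.det_vandermonde Yv,
    Matrix.det_eval_matrixOfPolynomials_eq_det_vandermonde Yv dq dq_natDegree dq_monic]
  congr 1
  ext i j
  rw [Matrix.of_apply, Matrix.of_apply, dq_eval]

lemma prefactor : (∏ p ∈ Finset.univ.filter (fun p : Fin m × Fin m => p.1 < p.2), XZ (-eps p.2))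
    = ∏ k : Fin m, XZ (-eps k) ^ (k : ℕ) := by
  rw [prod_pairs₂]
  refine Finset.prod_congr rfl fun j _ => ?_
  show ∏ _i ∈ Finset.Iio j, XZ (-eps j) = _
  rw [Finset.prod_const, Fin.card_Iio]

/-! #### The exponent data of the matrix entries -/

/-- The exponents (with multiplicity) appearing in row `r`, column `j`, shifted by `t`. -/
def Ls0 (r : Fin m) (j : ℕ) (t : ℤ) : ℤ →₀ ℤ :=
  if j = 0 then Finsupp.single (t - (r : ℕ)) 1
  else Finsupp.single (t + j - (r : ℕ)) 1 + Finsupp.single (t - j - (r : ℕ)) 1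

lemma evP_add (r : Fin m) (L L' : ℤ →₀ ℤ) :
    evP r (L + L') = evP r L + evP r L' :=
  Finsupp.sum_add_index' (fun z => AddMonoidAlgebra.single_zero _) (fun z b₁ b₂ => AddMonoidAlgebra.single_add _ _ _)

lemma evP_Ls0 (r : Fin m) (j : ℕ) (t : ℤ) :
    evP r (Ls0 r j t) = if j = 0 then XZ ((t - (r : ℕ)) • eps r)
      else XZ ((t + j - (r : ℕ)) • eps r) + XZ ((t - j - (r : ℕ)) • eps r) := by
  unfold Ls0
  split_ifs with h
  · rw [evP_single]; rfl
  · rw [evP_add, evP_single, evP_single]; rfl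

lemma ev_Ls0 {α : Type*} [AddCommGroup α] (h : ℤ → α) (r : Fin m) (j : ℕ) (t : ℤ) :
    ev h (Ls0 r j t) = if j = 0 then h (t - (r : ℕ))
      else h (t + j - (r : ℕ)) + h (t - j - (r : ℕ)) := by
  unfold Ls0
  split_ifs with hj
  · rw [ev_single, one_zsmul]
  · rw [ev_add, ev_single, ev_single, one_zsmul, one_zsmul]

lemma nsmul_eps (r : Fin m) (n : ℕ) : n • eps r = ((n : ℤ)) • eps r :=
  (natCast_zsmul _ _).symm

lemma nsmul_neg_eps (r : Fin m) (n : ℕ) : n • (-eps r) = ((-(n : ℤ))) • eps r := by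
  rw [smul_neg, nsmul_eps, ← neg_smul]

lemma neg_nsmul_eps (r : Fin m) (n : ℕ) : -(n • eps r) = ((-(n : ℤ))) • eps r := by
  rw [nsmul_eps, ← neg_smul]

lemma factor_small (r : Fin m) (j : ℕ) :
    evP r (Ls0 r j 0) = XZ (-eps r) ^ (r : ℕ) * Pc r j := by
  rw [XZ_pow, evP_Ls0, nsmul_neg_eps]
  unfold Pc
  split_ifs with h
  · rw [mul_one]
    congr 1
    congr 1
    omega
  · rw [neg_nsmul_eps r j, nsmul_eps r j, mul_add, XZ_mul, XZ_mul, ← add_smul, ← add_smul]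
    congr 1
    · congr 1
      congr 1
      omega
    · congr 1
      congr 1
      omega

/-! #### The expansion of `φ_m` -/

lemma key_small : phiSmall m = ∑ σ : Equiv.Perm (Fin m),
    (Equiv.Perm.sign σ : ℤ) • ∏ i, evP (σ i) (Ls0 (σ i) (i : ℕ) 0) := by
  rw [phiSmall, ← Finset.prod_mul_distrib,
    Finset.prod_congr rfl (fun p _ => pair_id p.1 p.2),
    Finset.prod_mul_distrib, prefactor, vdm, Matrix.det_apply, Finset.mul_sum]
  refine Finset.sum_congr rfl fun σ _ => ?_
  simp only [Units.smul_def]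
  rw [mul_smul_comm]
  congr 1
  rw [← Equiv.prod_comp σ (fun k => XZ (-eps k) ^ (k : ℕ)), ← Finset.prod_mul_distrib]
  refine Finset.prod_congr rfl fun i _ => ?_
  rw [Matrix.of_apply]
  exact (factor_small (σ i) (i : ℕ)).symm

end Stmt5Aux

namespace Stmt5Aux

open Finset AddMonoidAlgebra

variable {m : ℕ}

/-! #### Splitting the diagonal factors off `Φ_m` -/

lemma diag_prod {M : Type*} [CommMonoid M] (f : Fin m × Fin m → M) :
    ∏ p ∈ Finset.univ.filter (fun p : Fin m × Fin m => p.1 ≤ p.2), f p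
      = (∏ p ∈ Finset.univ.filter (fun p : Fin m × Fin m => p.1 < p.2), f p) *
          ∏ k : Fin m, f (k, k) := by
  have hsplit : Finset.univ.filter (fun p : Fin m × Fin m => p.1 ≤ p.2)
      = Finset.univ.filter (fun p : Fin m × Fin m => p.1 < p.2) ∪
          Finset.univ.filter (fun p : Fin m × Fin m => p.1 = p.2) := by
    ext p
    simp only [Finset.mem_filter, Finset.mem_union, Finset.mem_univ, true_and]
    exact le_iff_lt_or_eq
  have hdisj : Disjoint (Finset.univ.filter (fun p : Fin m × Fin m => p.1 < p.2))
      (Finset.univ.filter (fun p : Fin m × Fin m => p.1 = p.2)) := by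
    rw [Finset.disjoint_left]
    intro p hp hq
    simp only [Finset.mem_filter, Finset.mem_univ, true_and] at hp hq
    rw [hq] at hp
    exact lt_irrefl _ hp
  rw [hsplit, Finset.prod_union hdisj]
  congr 1
  refine Finset.prod_nbij' (fun p : Fin m × Fin m => p.1) (fun k => (k, k)) ?_ ?_ ?_ ?_ ?_
  · intro p _; exact Finset.mem_univ _
  · intro k _; simp
  · intro p hp
    simp only [Finset.mem_filter, Finset.mem_univ, true_and] at hp
    exact Prod.ext rfl hp
  · intro k _; rfl
  · intro p hp
    simp only [Finset.mem_filter, Finset.mem_univ, true_and] at hp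
    obtain ⟨a, b⟩ := p
    cases hp
    rfl

lemma phiBig_eq : phiBig m = phiSmall m * ∏ k : Fin m, (1 - XZ (-(eps k + eps k))) := by
  rw [phiBig, phiSmall, diag_prod (fun p : Fin m × Fin m => 1 - XZ (-(eps p.1 + eps p.2)))]
  ring

lemma XZ_scal_congr (r : Fin m) {a b : ℤ} (h : a = b) : XZ (a • eps r) = XZ (b • eps r) := by
  rw [h]

lemma factor_shift (r : Fin m) (j : ℕ) :
    evP r (Ls0 r j (-2)) = evP r (Ls0 r j 0) * XZ (-(eps r + eps r)) := by
  have hexp : -(eps r + eps r) = (-2 : ℤ) • eps r := by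
    funext k
    simp only [Pi.neg_apply, Pi.add_apply, Pi.smul_apply, smul_eq_mul]
    ring
  rw [hexp, evP_Ls0, evP_Ls0]
  split_ifs with h
  · rw [XZ_mul, ← add_smul]
    exact XZ_scal_congr r (by omega)
  · rw [add_mul, XZ_mul, XZ_mul, ← add_smul, ← add_smul]
    congr 1
    · exact XZ_scal_congr r (by omega)
    · exact XZ_scal_congr r (by omega)

lemma qb (r : Fin m) (j : ℕ) :
    evP r (Ls0 r j 0 - Ls0 r j (-2)) = evP r (Ls0 r j 0) * (1 - XZ (-(eps r + eps r))) := by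
  rw [evP_sub, factor_shift]
  ring

lemma key_big : phiBig m = ∑ σ : Equiv.Perm (Fin m),
    (Equiv.Perm.sign σ : ℤ) •
      ∏ i, evP (σ i) (Ls0 (σ i) (i : ℕ) 0 - Ls0 (σ i) (i : ℕ) (-2)) := by
  rw [phiBig_eq, key_small, Finset.sum_mul]
  refine Finset.sum_congr rfl fun σ _ => ?_
  rw [smul_mul_assoc]
  congr 1
  rw [← Equiv.prod_comp σ (fun k => 1 - XZ (-(eps k + eps k))), ← Finset.prod_mul_distrib]
  exact Finset.prod_congr rfl fun i _ => (qb (σ i) (i : ℕ)).symm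

/-! #### Properties of `e` and `E` -/

lemma eF_neg (g : RT) (mm : ℕ) {p : ℤ} (hp : p < 0) : eF g mm p = 0 := by
  rw [eF, if_neg (by omega), if_neg (by omega)]

lemma EF_sub (g : RT) (mm : ℕ) (a : ℤ) : EF g mm a - EF g mm (a - 2) = eF g mm a := by
  by_cases h0 : 0 ≤ a
  · by_cases h2 : 0 ≤ a - 2
    · rw [EF, EF, if_pos h0, if_pos h2]
      have hn : a.toNat / 2 + 1 = ((a - 2).toNat / 2 + 1) + 1 := by omega
      rw [hn, Finset.sum_range_succ']
      have he : ∀ x : ℕ, a - 2 * ((x : ℤ) + 1) = (a - 2) - 2 * x := fun x => by ring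
      simp only [Nat.cast_add, Nat.cast_one, Nat.cast_zero, mul_zero, sub_zero, he]
      ring
    · rw [EF, EF, if_pos h0, if_neg h2, sub_zero]
      have h1 : a.toNat / 2 + 1 = 1 := by omega
      rw [h1, Finset.sum_range_one]
      norm_num
  · rw [EF, EF, if_neg h0, if_neg (by omega), sub_self]
    exact (eF_neg g mm (by omega)).symm

/-! #### The matrix of `vDet` and its entries -/

/-- The matrix whose determinant is `vDet`. -/
def MatV (g : RT) (β : Wt m) : Matrix (Fin m) (Fin m) (KK m) :=
  Matrix.of fun i j =>
    if (j : ℕ) = 0 then eF g m (β i - (i : ℕ))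
    else eF g m (β i - (i : ℕ) + (j : ℕ)) + eF g m (β i - (i : ℕ) - (j : ℕ))

lemma vDet_eq (g : RT) (β : Wt m) : vDet g m β = (MatV g β).det := rfl

lemma entry_small (g : RT) (β : Wt m) (r j : Fin m) :
    ev (fun z => eF g m (β r + z)) (Ls0 r (j : ℕ) 0) = MatV g β r j := by
  rw [ev_Ls0, MatV, Matrix.of_apply]
  split_ifs with h
  · congr 1; ring
  · congr 1
    · congr 1; ring
    · congr 1; ring

lemma entry_big (g : RT) (β : Wt m) (r j : Fin m) :
    ev (fun z => EF g m (β r + z)) (Ls0 r (j : ℕ) 0 - Ls0 r (j : ℕ) (-2)) = MatV g β r j := by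
  rw [ev_sub, ev_Ls0, ev_Ls0, MatV, Matrix.of_apply]
  split_ifs with h
  · have e1 : β r + (0 - ((r : ℕ) : ℤ)) = β r - (r : ℕ) := by ring
    have e2 : β r + (-2 - ((r : ℕ) : ℤ)) = (β r - (r : ℕ)) - 2 := by ring
    rw [e1, e2, EF_sub]
  · have e1 : β r + (0 + ((j : ℕ) : ℤ) - ((r : ℕ) : ℤ)) = β r - (r : ℕ) + (j : ℕ) := by ring
    have e2 : β r + (0 - ((j : ℕ) : ℤ) - ((r : ℕ) : ℤ)) = β r - (r : ℕ) - (j : ℕ) := by ring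
    have e3 : β r + (-2 + ((j : ℕ) : ℤ) - ((r : ℕ) : ℤ))
        = (β r - (r : ℕ) + (j : ℕ)) - 2 := by ring
    have e4 : β r + (-2 - ((j : ℕ) : ℤ) - ((r : ℕ) : ℤ))
        = (β r - (r : ℕ) - (j : ℕ)) - 2 := by ring
    rw [e1, e2, e3, e4, ← EF_sub g m (β r - (r : ℕ) + (j : ℕ)),
      ← EF_sub g m (β r - (r : ℕ) - (j : ℕ))]
    ring

/-! #### The two halves of Statement 5 -/

lemma half_small (g : RT) (β : Wt m) :
    vDet g m β = psiHom (fun γ => eProd g m (β + γ)) (phiSmall m) := by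
  rw [key_small, map_sum]
  have hσ : ∀ σ : Equiv.Perm (Fin m),
      psiHom (fun γ => eProd g m (β + γ))
          ((Equiv.Perm.sign σ : ℤ) • ∏ i, evP (σ i) (Ls0 (σ i) (i : ℕ) 0))
        = (Equiv.Perm.sign σ : ℤ) • ∏ i, MatV g β (σ i) i := by
    intro σ
    rw [map_zsmul]
    congr 1
    have hmast := master (fun k z => eF g m (β k + z)) σ (fun i => Ls0 (σ i) (i : ℕ) 0)
    refine Eq.trans hmast ?_
    exact Finset.prod_congr rfl fun i _ => entry_small g β (σ i) i
  rw [Finset.sum_congr rfl (fun σ _ => hσ σ), vDet_eq, Matrix.det_apply]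
  simp only [Units.smul_def]

lemma half_big (g : RT) (β : Wt m) :
    vDet g m β = psiHom (fun γ => EProd g m (β + γ)) (phiBig m) := by
  rw [key_big, map_sum]
  have hσ : ∀ σ : Equiv.Perm (Fin m),
      psiHom (fun γ => EProd g m (β + γ))
          ((Equiv.Perm.sign σ : ℤ) •
            ∏ i, evP (σ i) (Ls0 (σ i) (i : ℕ) 0 - Ls0 (σ i) (i : ℕ) (-2)))
        = (Equiv.Perm.sign σ : ℤ) • ∏ i, MatV g β (σ i) i := by
    intro σ
    rw [map_zsmul]
    congr 1
    have hmast := master (fun k z => EF g m (β k + z)) σ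
      (fun i => Ls0 (σ i) (i : ℕ) 0 - Ls0 (σ i) (i : ℕ) (-2))
    refine Eq.trans hmast ?_
    exact Finset.prod_congr rfl fun i _ => entry_big g β (σ i) i
  rw [Finset.sum_congr rfl (fun σ _ => hσ σ), vDet_eq, Matrix.det_apply]
  simp only [Units.smul_def]

end Stmt5Aux

/-- With `a`, `A` the coefficient functions of `φ_m`, `Φ_m`, one has
`v_β^g = Σ_γ a(γ) e^g_{β+γ}` and `v_β^g = Σ_γ A(γ) E^g_{β+γ}` for every `β ∈ ℤ^m`. -/
theorem stmt5 (m : ℕ) (hm : 1 ≤ m) (g : RT) (β : Wt m) :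
    vDet g m β = ∑ᶠ γ : Wt m, coeffSmall m γ • eProd g m (β + γ) ∧
    vDet g m β = ∑ᶠ γ : Wt m, coeffBig m γ • EProd g m (β + γ) := by
  constructor
  · exact Stmt5Aux.half_small g β
  · exact Stmt5Aux.half_big g β

end
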